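/- For a real number α, the sequence (n·α)_{n≥1} is equidistributed mod 1 if and only if α is irrational. -/

import Mathlib

open Filter Finset Classical

/-- A sequence `x : ℕ → ℝ` is equidistributed mod 1 if for all `0 ≤ u ≤ v ≤ 1`,
the proportion of `n < N` with `Int.fract (x n) ∈ [u, v)` tends to `v - u`. -/
def EquidistributedMod1 (x : ℕ → ℝ) : Prop :=
  ∀ u v : ℝ, 0 ≤ u → u ≤ v → v ≤ 1 →
    Tendsto (fun N : ℕ =>
        (((Finset.range N).filter (fun n => Int.fract (x n) ∈ Set.Ico u v)).card : ℝ) / (N : ℝ))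
      atTop (nhds (v - u))

section WeylAux

open MeasureTheory Real Set AddCircle intervalIntegral

instance weylAux_fact_zero_lt_one : Fact ((0:ℝ) < 1) := ⟨one_pos⟩

lemma integral_fourier_eq_zero (k : ℤ) (hk : k ≠ 0) : ∫ x : AddCircle (1:ℝ), fourier k x = 0 := by
  have hc : (2 * π * Complex.I * k : ℂ) ≠ 0 := by
    simp [Real.pi_ne_zero, Complex.I_ne_zero, hk]
  calc ∫ x : AddCircle (1:ℝ), fourier k x
      = ∫ x in (0:ℝ)..(0+1), fourier k (x : AddCircle (1:ℝ)) :=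
        (AddCircle.intervalIntegral_preimage 1 0 _).symm
    _ = ∫ x in (0:ℝ)..(0+1), Complex.exp ((2 * π * Complex.I * k) * x) := by
        refine intervalIntegral.integral_congr fun x _ => ?_
        rw [fourier_coe_apply]
        exact congrArg Complex.exp (by push_cast; ring)
    _ = 0 := by
        rw [integral_exp_mul_complex hc]
        have h1 : Complex.exp ((2 * π * Complex.I * k) * (0+1:ℝ)) = 1 := by
          rw [show ((2 * π * Complex.I * k : ℂ) * (0+1:ℝ)) = k * (2 * π * Complex.I) by
            push_cast; ring]
          exact Complex.exp_int_mul_two_pi_mul_I k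
        rw [h1]
        simp

lemma integrable_cm (f : C(AddCircle (1:ℝ), ℂ)) :
    Integrable f (volume : Measure (AddCircle (1:ℝ))) := by
  have := (BoundedContinuousFunction.mkOfCompact f).integrable (μ := volume)
  exact this

lemma char_avg {α : ℝ} (hα : Irrational α) (k : ℤ) (hk : k ≠ 0) :
    Tendsto (fun N : ℕ => (∑ n ∈ Finset.range N,
      (fourier k : C(AddCircle (1:ℝ), ℂ)) (((n : ℝ) * α : ℝ) : AddCircle (1:ℝ))) / N)
      atTop (nhds 0) := by
  set z : ℂ := Complex.exp (2 * π * Complex.I * k * α) with hz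
  have hterm : ∀ n : ℕ, (fourier k : C(AddCircle (1:ℝ), ℂ)) (((n : ℝ) * α : ℝ) : AddCircle (1:ℝ)) = z ^ n := by
    intro n
    rw [fourier_coe_apply, hz, ← Complex.exp_nat_mul]
    exact congrArg Complex.exp (by push_cast; ring)
  have hznorm : ‖z‖ = 1 := by
    rw [hz, show (2 * π * Complex.I * k * α : ℂ) = ((2 * π * k * α : ℝ) : ℂ) * Complex.I by
      push_cast; ring]
    rw [Complex.norm_exp_ofReal_mul_I]
  have hz1 : z ≠ 1 := by
    intro h
    rw [hz, Complex.exp_eq_one_iff] at h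
    obtain ⟨m, hm⟩ := h
    have h2 : (2 * π * Complex.I : ℂ) ≠ 0 := by
      simp [Real.pi_ne_zero, Complex.I_ne_zero]
    have : ((k * α : ℝ) : ℂ) = ((m : ℝ) : ℂ) := by
      apply mul_left_cancel₀ h2
      push_cast
      push_cast at hm
      linear_combination hm
    have h3 : (k : ℝ) * α = (m : ℝ) := by exact_mod_cast this
    exact (Irrational.intCast_mul hα hk).ne_int m h3
  have hbound : ∀ N : ℕ, ‖(∑ n ∈ Finset.range N, z ^ n) / N‖ ≤ (2 / ‖z - 1‖) / N := by
    intro N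
    rw [geom_sum_eq hz1, norm_div, norm_div]
    have : ‖z ^ N - 1‖ ≤ 2 := by
      calc ‖z ^ N - 1‖ ≤ ‖z ^ N‖ + ‖(1:ℂ)‖ := norm_sub_le _ _
        _ = 2 := by rw [norm_pow, hznorm]; norm_num
    have hz1' : (0:ℝ) < ‖z - 1‖ := norm_pos_iff.mpr (sub_ne_zero.mpr hz1)
    have hNn : ‖((N:ℕ):ℂ)‖ = (N:ℝ) := by simp
    rw [hNn]
    gcongr
  have hlim : Tendsto (fun N : ℕ => (2 / ‖z - 1‖) / N) atTop (nhds 0) :=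
    tendsto_const_div_atTop_nhds_zero_nat _
  rw [show (0:ℂ) = 0 from rfl]
  rw [tendsto_zero_iff_norm_tendsto_zero]
  apply squeeze_zero (fun N => norm_nonneg _) (fun N => ?_) hlim
  simp only [hterm]
  exact hbound N

lemma avg_tendsto {α : ℝ} (hα : Irrational α) (f : C(AddCircle (1:ℝ), ℂ)) :
    Tendsto (fun N : ℕ => (∑ n ∈ Finset.range N, f (((n : ℝ) * α : ℝ) : AddCircle (1:ℝ))) / N)
      atTop (nhds (∫ x : AddCircle (1:ℝ), f x)) := by
  haveI : IsProbabilityMeasure (volume : Measure (AddCircle (1:ℝ))) :=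
    ⟨by simp [AddCircle.measure_univ]⟩
  set P : C(AddCircle (1:ℝ), ℂ) → Prop := fun g =>
    Tendsto (fun N : ℕ => (∑ n ∈ Finset.range N, g (((n : ℝ) * α : ℝ) : AddCircle (1:ℝ))) / N)
      atTop (nhds (∫ x : AddCircle (1:ℝ), g x)) with hP
  -- P holds on the span of the fourier monomials
  have hspan : ∀ g ∈ Submodule.span ℂ (Set.range (@fourier 1)), P g := by
    intro g hg
    induction hg using Submodule.span_induction with
    | mem g hg =>
      obtain ⟨k, rfl⟩ := hg
      rcases eq_or_ne k 0 with rfl | hk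
      · simp only [hP]
        have h1 : ∀ N : ℕ, (∑ n ∈ Finset.range N,
            (fourier 0 : C(AddCircle (1:ℝ), ℂ)) (((n : ℝ) * α : ℝ) : AddCircle (1:ℝ))) / N
            = (N : ℂ) / N := by
          intro N
          congr 1
          simp [fourier_zero]
        have h2 : (∫ x : AddCircle (1:ℝ), (fourier 0 : C(AddCircle (1:ℝ), ℂ)) x) = 1 := by
          simp [fourier_zero]
        rw [h2]
        simp only [h1]
        have : ∀ᶠ N : ℕ in atTop, (N : ℂ) / N = 1 := by
          filter_upwards [eventually_ge_atTop 1] with N hN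
          rw [div_self]
          exact_mod_cast Nat.one_le_iff_ne_zero.mp hN
        exact Tendsto.congr' (this.mono fun N h => h.symm) tendsto_const_nhds
      · simp only [hP]
        rw [integral_fourier_eq_zero k hk]
        exact char_avg hα k hk
    | zero => simp [hP, tendsto_const_nhds]
    | add g₁ g₂ _ _ h₁ h₂ =>
      simp only [hP, ContinuousMap.add_apply] at *
      have := h₁.add h₂
      rw [← integral_add (integrable_cm g₁) (integrable_cm g₂)] at this
      refine this.congr fun N => ?_
      rw [← add_div, ← Finset.sum_add_distrib]
    | smul c g _ h =>
      simp only [hP, ContinuousMap.smul_apply] at *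
      have := h.const_smul c
      rw [← MeasureTheory.integral_smul] at this
      refine this.congr fun N => ?_
      rw [← Finset.smul_sum, smul_div_assoc]
  -- density
  have hfmem : f ∈ closure ((Submodule.span ℂ (Set.range (@fourier 1)) : Submodule ℂ C(AddCircle (1:ℝ), ℂ)) : Set C(AddCircle (1:ℝ), ℂ)) := by
    rw [← Submodule.topologicalClosure_coe, span_fourier_closure_eq_top]
    trivial
  rw [Metric.tendsto_atTop]
  intro ε hε
  obtain ⟨g, hgmem, hgdist⟩ := Metric.mem_closure_iff.mp hfmem (ε/3) (by positivity)
  have hPg := hspan g hgmem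
  rw [hP, Metric.tendsto_atTop] at hPg
  obtain ⟨N₀, hN₀⟩ := hPg (ε/3) (by positivity)
  refine ⟨max N₀ 1, fun N hN => ?_⟩
  have hN1 : 1 ≤ N := le_trans (le_max_right _ _) hN
  have hNpos : (0:ℝ) < N := by exact_mod_cast hN1
  have key1 : dist ((∑ n ∈ Finset.range N, f (((n : ℝ) * α : ℝ) : AddCircle (1:ℝ))) / N)
      ((∑ n ∈ Finset.range N, g (((n : ℝ) * α : ℝ) : AddCircle (1:ℝ))) / N) ≤ dist f g := by
    rw [dist_eq_norm, div_sub_div_same, ← Finset.sum_sub_distrib, norm_div]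
    have : ‖∑ n ∈ Finset.range N, (f (((n : ℝ) * α : ℝ) : AddCircle (1:ℝ)) - g (((n : ℝ) * α : ℝ) : AddCircle (1:ℝ)))‖
        ≤ ∑ n ∈ Finset.range N, dist (f (((n : ℝ) * α : ℝ) : AddCircle (1:ℝ))) (g (((n : ℝ) * α : ℝ) : AddCircle (1:ℝ))) := by
      refine le_trans (norm_sum_le _ _) (Finset.sum_le_sum fun n _ => ?_)
      rw [← dist_eq_norm]
    calc ‖∑ n ∈ Finset.range N, (f _ - g _)‖ / ‖(N:ℂ)‖
        ≤ (∑ n ∈ Finset.range N, dist (f (((n : ℝ) * α : ℝ) : AddCircle (1:ℝ))) (g (((n : ℝ) * α : ℝ) : AddCircle (1:ℝ)))) / ‖(N:ℂ)‖ :=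
          div_le_div_of_nonneg_right this (norm_nonneg _)
      _ ≤ (∑ n ∈ Finset.range N, dist f g) / ‖(N:ℂ)‖ := by
          gcongr with n _
          exact ContinuousMap.dist_apply_le_dist _
      _ = (N * dist f g) / N := by
          rw [Finset.sum_const, card_range, nsmul_eq_mul]
          norm_num
      _ = dist f g := by field_simp
  have key2 : dist (∫ x : AddCircle (1:ℝ), g x) (∫ x : AddCircle (1:ℝ), f x) ≤ dist g f := by
    rw [dist_eq_norm, ← integral_sub (integrable_cm g) (integrable_cm f)]
    have hb : ∀ᵐ x ∂(volume : Measure (AddCircle (1:ℝ))), ‖g x - f x‖ ≤ dist g f := by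
      filter_upwards with x
      rw [← dist_eq_norm]
      exact ContinuousMap.dist_apply_le_dist _
    calc ‖∫ x : AddCircle (1:ℝ), (g x - f x)‖
        ≤ dist g f * ((volume : Measure (AddCircle (1:ℝ))) Set.univ).toReal :=
          norm_integral_le_of_norm_le_const hb
      _ = dist g f := by simp
  calc dist ((∑ n ∈ Finset.range N, f (((n : ℝ) * α : ℝ) : AddCircle (1:ℝ))) / N) (∫ x : AddCircle (1:ℝ), f x)
      ≤ dist ((∑ n ∈ Finset.range N, f (((n : ℝ) * α : ℝ) : AddCircle (1:ℝ))) / N)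
          ((∑ n ∈ Finset.range N, g (((n : ℝ) * α : ℝ) : AddCircle (1:ℝ))) / N)
        + dist ((∑ n ∈ Finset.range N, g (((n : ℝ) * α : ℝ) : AddCircle (1:ℝ))) / N)
            (∫ x : AddCircle (1:ℝ), g x)
        + dist (∫ x : AddCircle (1:ℝ), g x) (∫ x : AddCircle (1:ℝ), f x) := dist_triangle4 _ _ _ _
    _ < ε := by
        have h1 := hN₀ N (le_trans (le_max_left _ _) hN)
        have h2 : dist g f = dist f g := dist_comm _ _
        have := key2
        rw [h2] at this
        linarith [key1, hN₀ N (le_trans (le_max_left _ _) hN), this, hgdist]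

lemma coe_fract (y : ℝ) : ((Int.fract y : ℝ) : AddCircle (1:ℝ)) = ((y : ℝ) : AddCircle (1:ℝ)) := by
  rw [Int.fract]
  have h1 : ((⌊y⌋ : ℝ) : AddCircle (1:ℝ)) = 0 := by
    have : ((⌊y⌋ : ℝ)) = ⌊y⌋ • (1:ℝ) := by simp
    rw [this, AddCircle.coe_zsmul, AddCircle.coe_period, smul_zero]
  rw [AddCircle.coe_sub, h1, sub_zero]

lemma avg_tendsto_real {α : ℝ} (hα : Irrational α) (g : ℝ → ℝ) (hc : Continuous g)
    (hg : g 0 = g 1) :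
    Tendsto (fun N : ℕ => (∑ n ∈ Finset.range N, g (Int.fract ((n : ℝ) * α))) / N)
      atTop (nhds (∫ x in (0:ℝ)..1, g x)) := by
  have hg' : g 0 = g (0 + 1) := by rwa [zero_add]
  have hGc : Continuous (AddCircle.liftIco 1 0 g) :=
    AddCircle.liftIco_continuous hg' hc.continuousOn
  set F : C(AddCircle (1:ℝ), ℂ) := ⟨fun x => ((AddCircle.liftIco 1 0 g x : ℝ) : ℂ),
    Complex.continuous_ofReal.comp hGc⟩ with hF
  have hmain := avg_tendsto hα F
  -- rewrite the integral
  have hint : (∫ x : AddCircle (1:ℝ), F x) = ((∫ x in (0:ℝ)..1, g x : ℝ) : ℂ) := by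
    have h1 : (∫ x : AddCircle (1:ℝ), F x)
        = ((∫ x : AddCircle (1:ℝ), AddCircle.liftIco 1 0 g x : ℝ) : ℂ) := by
      simp only [hF, ContinuousMap.coe_mk]
      exact integral_ofReal
    rw [h1]
    congr 1
    rw [← AddCircle.intervalIntegral_preimage 1 0 (AddCircle.liftIco 1 0 g)]
    rw [zero_add]
    refine intervalIntegral.integral_congr fun x hx => ?_
    rw [Set.uIcc_of_le (by norm_num : (0:ℝ) ≤ 1)] at hx
    rcases lt_or_eq_of_le hx.2 with h | h
    · exact AddCircle.liftIco_coe_apply (by rw [zero_add]; exact ⟨hx.1, h⟩)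
    · have : ((x : ℝ) : AddCircle (1:ℝ)) = ((0 : ℝ) : AddCircle (1:ℝ)) := by
        rw [h]; exact_mod_cast AddCircle.coe_period (p := (1:ℝ))
      rw [this, AddCircle.liftIco_coe_apply (by rw [zero_add]; exact ⟨le_refl 0, one_pos⟩), hg, h]
  rw [hint] at hmain
  have hre := (Complex.continuous_re.tendsto _).comp hmain
  simp only [Complex.ofReal_re] at hre
  refine hre.congr fun N => ?_
  simp only [Function.comp_apply, hF, ContinuousMap.coe_mk]
  have hterm : ∀ n : ℕ, AddCircle.liftIco 1 0 g (((n : ℝ) * α : ℝ) : AddCircle (1:ℝ))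
      = g (Int.fract ((n : ℝ) * α)) := by
    intro n
    rw [← coe_fract]
    exact AddCircle.liftIco_coe_apply
      (by rw [zero_add]; exact ⟨Int.fract_nonneg _, Int.fract_lt_one _⟩)
  simp only [hterm]
  rw [show (∑ n ∈ Finset.range N, ((g (Int.fract ((n : ℝ) * α)) : ℝ) : ℂ))
      = ((∑ n ∈ Finset.range N, g (Int.fract ((n : ℝ) * α)) : ℝ) : ℂ) by push_cast; rfl]
  rw [show ((N : ℂ)) = (((N : ℝ)) : ℂ) by push_cast; rfl]
  rw [← Complex.ofReal_div, Complex.ofReal_re]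

lemma count_tendsto {α : ℝ} (hα : Irrational α) (t : ℝ) (ht0 : 0 ≤ t) (ht1 : t ≤ 1) :
    Tendsto (fun N : ℕ =>
        (((Finset.range N).filter (fun n : ℕ => Int.fract ((n : ℝ) * α) ∈ Set.Ico (0:ℝ) t)).card : ℝ) / N)
      atTop (nhds t) := by
  rw [Metric.tendsto_atTop]
  intro ε hε
  set δ : ℝ := min (ε/4) (1/2) with hδdef
  have hδ : 0 < δ := by positivity
  have hδ1 : δ ≤ 1/2 := min_le_right _ _
  have hδε : 2*δ ≤ ε/2 := by
    have : δ ≤ ε/4 := min_le_left _ _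
    linarith
  -- lower trapezoid
  set g : ℝ → ℝ := fun x => max 0 (min (x/δ) (min 1 ((t - x)/δ))) with hgdef
  -- upper trapezoid
  set h : ℝ → ℝ := fun x => min 1 (max 0 (min 1 ((t + δ - x)/δ)) + max 0 (min 1 ((x - (1 - δ))/δ))) with hhdef
  have hgc : Continuous g := by fun_prop
  have hhc : Continuous h := by fun_prop
  have hg01 : g 0 = g 1 := by
    have h0 : g 0 = 0 := by
      apply max_eq_left
      calc min (0/δ) (min 1 ((t - 0)/δ)) ≤ 0/δ := min_le_left _ _
        _ = 0 := zero_div _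
    have h1 : g 1 = 0 := by
      apply max_eq_left
      calc min (1/δ) (min 1 ((t - 1)/δ)) ≤ min 1 ((t - 1)/δ) := min_le_right _ _
        _ ≤ (t - 1)/δ := min_le_right _ _
        _ ≤ 0 := div_nonpos_of_nonpos_of_nonneg (by linarith) hδ.le
    rw [h0, h1]
  have hh01 : h 0 = h 1 := by
    have hA0 : max 0 (min 1 ((t + δ - 0)/δ)) = 1 := by
      rw [min_eq_left (by rw [le_div_iff₀ hδ]; linarith), max_eq_right zero_le_one]
    have hB0 : max 0 (min 1 ((0 - (1 - δ))/δ)) = 0 := by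
      apply max_eq_left
      calc min 1 ((0 - (1 - δ))/δ) ≤ (0 - (1 - δ))/δ := min_le_right _ _
        _ ≤ 0 := div_nonpos_of_nonpos_of_nonneg (by linarith) hδ.le
    have hB1 : max 0 (min 1 ((1 - (1 - δ))/δ)) = 1 := by
      rw [min_eq_left (by rw [le_div_iff₀ hδ]; linarith), max_eq_right zero_le_one]
    have h0 : h 0 = 1 := by
      simp only [hhdef]
      rw [hA0, hB0, add_zero, min_eq_right le_rfl]
    have h1 : h 1 = 1 := by
      simp only [hhdef]
      rw [hB1]
      apply min_eq_left
      have : (0:ℝ) ≤ max 0 (min 1 ((t + δ - 1)/δ)) := le_max_left _ _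
      linarith
    rw [h0, h1]
  -- pointwise comparison with the indicator
  have hg_le : ∀ y : ℝ, 0 ≤ y → g y ≤ (if y < t then (1:ℝ) else 0) := by
    intro y hy
    by_cases hyt : y < t
    · rw [if_pos hyt]
      apply max_le zero_le_one
      calc min (y/δ) (min 1 ((t - y)/δ)) ≤ min 1 ((t - y)/δ) := min_le_right _ _
        _ ≤ 1 := min_le_left _ _
    · rw [if_neg hyt]
      apply max_le le_rfl
      calc min (y/δ) (min 1 ((t - y)/δ)) ≤ min 1 ((t - y)/δ) := min_le_right _ _
        _ ≤ (t - y)/δ := min_le_right _ _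
        _ ≤ 0 := div_nonpos_of_nonpos_of_nonneg (by push_neg at hyt; linarith) hδ.le
  have hh_ge : ∀ y : ℝ, 0 ≤ y → (if y < t then (1:ℝ) else 0) ≤ h y := by
    intro y hy
    by_cases hyt : y < t
    · rw [if_pos hyt]
      apply le_min le_rfl
      have hA : max 0 (min 1 ((t + δ - y)/δ)) = 1 := by
        rw [min_eq_left (by rw [le_div_iff₀ hδ]; linarith), max_eq_right zero_le_one]
      rw [hA]
      have : (0:ℝ) ≤ max 0 (min 1 ((y - (1 - δ))/δ)) := le_max_left _ _
      linarith
    · rw [if_neg hyt]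
      apply le_min zero_le_one
      have h1 : (0:ℝ) ≤ max 0 (min 1 ((t + δ - y)/δ)) := le_max_left _ _
      have h2 : (0:ℝ) ≤ max 0 (min 1 ((y - (1 - δ))/δ)) := le_max_left _ _
      linarith
  -- integral bounds
  have hint_h : ∫ x in (0:ℝ)..1, h x ≤ t + 2*δ := by
    have hh_le_one : ∀ x : ℝ, h x ≤ 1 := fun x => min_le_left _ _
    by_cases hcase : 1 ≤ t + 2*δ
    · calc ∫ x in (0:ℝ)..1, h x ≤ ∫ _x in (0:ℝ)..1, (1:ℝ) := by
            apply intervalIntegral.integral_mono_on (by norm_num)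
              (hhc.intervalIntegrable _ _) intervalIntegrable_const
            intro x _
            exact hh_le_one x
        _ = 1 := by simp
        _ ≤ t + 2*δ := hcase
    · push_neg at hcase
      have hb1 : (0:ℝ) ≤ t + δ := by linarith
      have hb2 : t + δ ≤ 1 - δ := by linarith
      have hb3 : (1:ℝ) - δ ≤ 1 := by linarith
      have hsplit : ∫ x in (0:ℝ)..1, h x
          = (∫ x in (0:ℝ)..(t+δ), h x) + (∫ x in (t+δ)..(1-δ), h x) + (∫ x in (1-δ)..(1:ℝ), h x) := by
        rw [intervalIntegral.integral_add_adjacent_intervals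
            (hhc.intervalIntegrable _ _) (hhc.intervalIntegrable _ _),
          intervalIntegral.integral_add_adjacent_intervals
            (hhc.intervalIntegrable _ _) (hhc.intervalIntegrable _ _)]
      have hmid : (∫ x in (t+δ)..(1-δ), h x) = 0 := by
        have : EqOn h 0 (Set.uIcc (t+δ) (1-δ)) := by
          intro x hx
          rw [Set.uIcc_of_le hb2] at hx
          have hx1 : t + δ ≤ x := hx.1
          have hx2 : x ≤ 1 - δ := hx.2
          have hA : max 0 (min 1 ((t + δ - x)/δ)) = 0 := by
            apply max_eq_left
            calc min 1 ((t + δ - x)/δ) ≤ (t + δ - x)/δ := min_le_right _ _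
              _ ≤ 0 := div_nonpos_of_nonpos_of_nonneg (by linarith) hδ.le
          have hB : max 0 (min 1 ((x - (1 - δ))/δ)) = 0 := by
            apply max_eq_left
            calc min 1 ((x - (1 - δ))/δ) ≤ (x - (1 - δ))/δ := min_le_right _ _
              _ ≤ 0 := div_nonpos_of_nonpos_of_nonneg (by linarith) hδ.le
          simp only [hhdef, hA, hB, add_zero, Pi.zero_apply]
          rw [min_eq_right zero_le_one]
        rw [intervalIntegral.integral_congr this]
        simp
      have hleft : (∫ x in (0:ℝ)..(t+δ), h x) ≤ t + δ := by
        calc (∫ x in (0:ℝ)..(t+δ), h x) ≤ ∫ _x in (0:ℝ)..(t+δ), (1:ℝ) := by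
              apply intervalIntegral.integral_mono_on hb1
                (hhc.intervalIntegrable _ _) intervalIntegrable_const
              intro x _; exact hh_le_one x
          _ = t + δ := by simp
      have hright : (∫ x in (1-δ)..(1:ℝ), h x) ≤ δ := by
        calc (∫ x in (1-δ)..(1:ℝ), h x) ≤ ∫ _x in (1-δ)..(1:ℝ), (1:ℝ) := by
              apply intervalIntegral.integral_mono_on hb3
                (hhc.intervalIntegrable _ _) intervalIntegrable_const
              intro x _; exact hh_le_one x
          _ = δ := by simp
      rw [hsplit]
      rw [hmid]
      linarith
  have hint_g : t - 2*δ ≤ ∫ x in (0:ℝ)..1, g x := by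
    have hg_nonneg : ∀ x : ℝ, 0 ≤ g x := fun x => le_max_left _ _
    by_cases hcase : t ≤ 2*δ
    · have : (0:ℝ) ≤ ∫ x in (0:ℝ)..1, g x := by
        apply intervalIntegral.integral_nonneg (by norm_num)
        intro x _; exact hg_nonneg x
      linarith
    · push_neg at hcase
      have hb1 : (0:ℝ) ≤ δ := hδ.le
      have hb2 : δ ≤ t - δ := by linarith
      have hb3 : t - δ ≤ 1 := by linarith
      have hsplit : ∫ x in (0:ℝ)..1, g x
          = (∫ x in (0:ℝ)..δ, g x) + (∫ x in δ..(t-δ), g x) + (∫ x in (t-δ)..(1:ℝ), g x) := by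
        rw [intervalIntegral.integral_add_adjacent_intervals
            (hgc.intervalIntegrable _ _) (hgc.intervalIntegrable _ _),
          intervalIntegral.integral_add_adjacent_intervals
            (hgc.intervalIntegrable _ _) (hgc.intervalIntegrable _ _)]
      have hmid : t - 2*δ ≤ ∫ x in δ..(t-δ), g x := by
        calc t - 2*δ = ∫ _x in δ..(t-δ), (1:ℝ) := by simp; ring
          _ ≤ ∫ x in δ..(t-δ), g x := by
              apply intervalIntegral.integral_mono_on hb2
                intervalIntegrable_const (hgc.intervalIntegrable _ _)
              intro x hx
              apply le_max_of_le_right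
              apply le_min
              · rw [le_div_iff₀ hδ]; linarith [hx.1]
              · apply le_min le_rfl
                rw [le_div_iff₀ hδ]; linarith [hx.2]
      have hl : (0:ℝ) ≤ ∫ x in (0:ℝ)..δ, g x := by
        apply intervalIntegral.integral_nonneg hb1
        intro x _; exact hg_nonneg x
      have hr : (0:ℝ) ≤ ∫ x in (t-δ)..(1:ℝ), g x := by
        apply intervalIntegral.integral_nonneg hb3
        intro x _; exact hg_nonneg x
      rw [hsplit]
      linarith
  -- limits of the averages
  have hlimg := avg_tendsto_real hα g hgc hg01
  have hlimh := avg_tendsto_real hα h hhc hh01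
  rw [Metric.tendsto_atTop] at hlimg hlimh
  obtain ⟨N₁, hN₁⟩ := hlimg (ε/2) (by positivity)
  obtain ⟨N₂, hN₂⟩ := hlimh (ε/2) (by positivity)
  refine ⟨max (max N₁ N₂) 1, fun N hN => ?_⟩
  have hNN1 : N₁ ≤ N := le_trans (le_trans (le_max_left _ _) (le_max_left _ _)) hN
  have hNN2 : N₂ ≤ N := le_trans (le_trans (le_max_right _ _) (le_max_left _ _)) hN
  have hN1 : 1 ≤ N := le_trans (le_max_right _ _) hN
  have hNpos : (0:ℝ) < N := by exact_mod_cast hN1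
  -- card as a sum of indicators
  have hcard : (((Finset.range N).filter (fun n : ℕ => Int.fract ((n : ℝ) * α) ∈ Set.Ico (0:ℝ) t)).card : ℝ)
      = ∑ n ∈ Finset.range N, (if Int.fract ((n : ℝ) * α) < t then (1:ℝ) else 0) := by
    rw [Finset.natCast_card_filter]
    exact Finset.sum_congr rfl fun n _ =>
      if_congr (by simp [Set.mem_Ico, Int.fract_nonneg]) rfl rfl
  have hsand_lo : (∑ n ∈ Finset.range N, g (Int.fract ((n : ℝ) * α))) / N
      ≤ (((Finset.range N).filter (fun n : ℕ => Int.fract ((n : ℝ) * α) ∈ Set.Ico (0:ℝ) t)).card : ℝ) / N := by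
    rw [hcard]
    gcongr with n _
    exact hg_le _ (Int.fract_nonneg _)
  have hsand_hi : (((Finset.range N).filter (fun n : ℕ => Int.fract ((n : ℝ) * α) ∈ Set.Ico (0:ℝ) t)).card : ℝ) / N
      ≤ (∑ n ∈ Finset.range N, h (Int.fract ((n : ℝ) * α))) / N := by
    rw [hcard]
    gcongr with n _
    exact hh_ge _ (Int.fract_nonneg _)
  have e1 := hN₁ N hNN1
  have e2 := hN₂ N hNN2
  rw [Real.dist_eq] at e1 e2 ⊢
  rw [abs_lt] at e1 e2
  rw [abs_lt]
  constructor
  · have : t - ε < (∑ n ∈ Finset.range N, g (Int.fract ((n : ℝ) * α))) / N := by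
      have := e1.1
      linarith
    linarith [hsand_lo]
  · have : (∑ n ∈ Finset.range N, h (Int.fract ((n : ℝ) * α))) / N < t + ε := by
      have := e2.2
      linarith
    linarith [hsand_hi]

end WeylAux

/-- Weyl: `(n·α)` is equidistributed mod 1 if and only if `α` is irrational. -/
theorem nsmul_equidistributed_iff_irrational (α : ℝ) :
    EquidistributedMod1 (fun n : ℕ => (n : ℝ) * α) ↔ Irrational α := by
  constructor
  · intro heq
    by_contra hrat
    have hrat' : α ∈ Set.range ((↑) : ℚ → ℝ) := not_not.mp hrat
    obtain ⟨q, hq⟩ := hrat'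
    set d : ℕ := q.den with hd
    have hd1 : 1 ≤ d := q.pos
    have hdR : (0:ℝ) < d := by exact_mod_cast hd1
    have hu0 : (0:ℝ) ≤ 1/(2*d) := by positivity
    have huv : (1:ℝ)/(2*d) ≤ 1/d := by
      apply div_le_div_of_nonneg_left one_pos.le hdR
      linarith
    have hv1 : (1:ℝ)/d ≤ 1 := by
      rw [div_le_one hdR]
      exact_mod_cast hd1
    have hmem : ∀ n : ℕ, Int.fract ((n : ℝ) * α) ∉ Set.Ico (1/(2*(d:ℝ))) (1/(d:ℝ)) := by
      intro n hmemn
      obtain ⟨h1, h2⟩ := hmemn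
      -- d * fract(nα) is an integer
      have hαd : (d:ℝ) * α = (q.num : ℝ) := by
        rw [← hq, Rat.cast_def, hd]
        field_simp
      set m : ℤ := (n : ℤ) * q.num - d * ⌊(n : ℝ) * α⌋ with hm
      have hdm : (d:ℝ) * Int.fract ((n : ℝ) * α) = (m : ℝ) := by
        rw [Int.fract]
        push_cast [hm]
        linear_combination (n:ℝ) * hαd
      have hlow : (1:ℝ)/2 ≤ (m : ℝ) := by
        rw [← hdm]
        calc (1:ℝ)/2 = (d:ℝ) * (1/(2*d)) := by field_simp
          _ ≤ (d:ℝ) * Int.fract ((n : ℝ) * α) := by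
              apply mul_le_mul_of_nonneg_left h1 hdR.le
      have hhigh : (m : ℝ) < 1 := by
        rw [← hdm]
        calc (d:ℝ) * Int.fract ((n : ℝ) * α) < (d:ℝ) * (1/d) := by
              apply mul_lt_mul_of_pos_left h2 hdR
          _ = 1 := by field_simp
      have hm1 : m < 1 := by exact_mod_cast hhigh
      have hm0 : m ≤ 0 := by omega
      have : (m : ℝ) ≤ 0 := by exact_mod_cast hm0
      linarith
    have h0 := heq (1/(2*(d:ℝ))) (1/(d:ℝ)) hu0 huv hv1
    have hzero : ∀ N : ℕ, (((Finset.range N).filter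
        (fun n => Int.fract ((fun n : ℕ => (n : ℝ) * α) n) ∈ Set.Ico (1/(2*(d:ℝ))) (1/(d:ℝ)))).card : ℝ) / N = 0 := by
      intro N
      rw [Finset.filter_false_of_mem, Finset.card_empty]
      · simp
      · intro n _
        exact hmem n
    rw [tendsto_congr hzero] at h0
    have := tendsto_nhds_unique h0 tendsto_const_nhds
    have hgap : (0:ℝ) < 1/(d:ℝ) - 1/(2*(d:ℝ)) := by
      rw [sub_pos]
      apply div_lt_div_of_pos_left one_pos (by positivity)
      linarith
    rw [← this] at hgap
    linarith
  · intro hα u v hu huv hv1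
    have hv := count_tendsto hα v (le_trans hu huv) hv1
    have hu' := count_tendsto hα u hu (le_trans huv hv1)
    have hdiff := hv.sub hu'
    rw [show v - u = v - u from rfl] at hdiff
    refine hdiff.congr fun N => ?_
    have hsubset : (Finset.range N).filter (fun n : ℕ => Int.fract ((n : ℝ) * α) ∈ Set.Ico (0:ℝ) u)
        ⊆ (Finset.range N).filter (fun n : ℕ => Int.fract ((n : ℝ) * α) ∈ Set.Ico (0:ℝ) v) := by
      apply Finset.monotone_filter_right
      intro n _ hn
      exact ⟨hn.1, lt_of_lt_of_le hn.2 huv⟩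
    have hsdiff : (Finset.range N).filter
          (fun n => Int.fract ((fun n : ℕ => (n : ℝ) * α) n) ∈ Set.Ico u v)
        = ((Finset.range N).filter (fun n : ℕ => Int.fract ((n : ℝ) * α) ∈ Set.Ico (0:ℝ) v))
          \ ((Finset.range N).filter (fun n : ℕ => Int.fract ((n : ℝ) * α) ∈ Set.Ico (0:ℝ) u)) := by
      ext n
      simp only [Finset.mem_sdiff, Finset.mem_filter, Set.mem_Ico]
      constructor
      · rintro ⟨hn, h1, h2⟩
        exact ⟨⟨hn, Int.fract_nonneg _, h2⟩, fun hc => absurd hc.2.2 (not_lt.mpr h1)⟩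
      · rintro ⟨⟨hn, _, h2⟩, hc⟩
        refine ⟨hn, ?_, h2⟩
        by_contra hlt
        push_neg at hlt
        exact hc ⟨hn, Int.fract_nonneg _, hlt⟩
    rw [hsdiff, Finset.card_sdiff_of_subset hsubset]
    rw [Nat.cast_sub (Finset.card_le_card hsubset)]
    rw [sub_div]
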